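/- Let ρ = (p/2) Σ_{i,j=0}^{1} |ii⟩⟨jj| + ((1−p)/3) Σ_{k,l=2}^{4} |kk⟩⟨ll| on ℂ⁵⊗ℂ⁵, and δ = (1/2) Σ_{i=0}^{1} |ii⟩⟨ii|. Then ‖ρ − δ‖₁ = 2−2p if p < 1/2, and ‖ρ − δ‖₁ = 1 if p ≥ 1/2. -/

import Mathlib

open Matrix
open scoped ComplexOrder

/-- The positive semidefinite square root of a positive semidefinite matrix
(removed from Mathlib; restored with its old definition). -/
noncomputable def Matrix.PosSemidef.sqrt {n : Type*} {𝕜 : Type*} [Fintype n] [RCLike 𝕜]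
    [DecidableEq n] {A : Matrix n n 𝕜} (hA : A.PosSemidef) : Matrix n n 𝕜 :=
  hA.1.eigenvectorUnitary.1 * diagonal ((↑) ∘ (√·) ∘ hA.1.eigenvalues) *
  (star hA.1.eigenvectorUnitary : Matrix n n 𝕜)

/-- The trace norm ‖M‖₁ = Tr√(M†M). -/
noncomputable def traceNorm {n : Type*} [Fintype n] [DecidableEq n]
    (M : Matrix n n ℂ) : ℝ :=
  ((Matrix.posSemidef_conjTranspose_mul_self M).sqrt.trace).re

/-- The state ρ = (p/2) Σ_{i,j=0}^{1} |ii⟩⟨jj| + ((1−p)/3) Σ_{k,l=2}^{4} |kk⟩⟨ll|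
on ℂ⁵⊗ℂ⁵. -/
noncomputable def ρstate (p : ℝ) : Matrix (Fin 5 × Fin 5) (Fin 5 × Fin 5) ℂ :=
  Matrix.of fun a b =>
    if a.1 = a.2 ∧ b.1 = b.2 then
      (if a.1.val ≤ 1 ∧ b.1.val ≤ 1 then (p : ℂ) / 2
        else if 2 ≤ a.1.val ∧ 2 ≤ b.1.val then (1 - (p : ℂ)) / 3 else 0)
    else 0

/-- The separable state δ = (1/2) Σ_{i=0}^{1} |ii⟩⟨ii| on ℂ⁵⊗ℂ⁵. -/
noncomputable def δstate : Matrix (Fin 5 × Fin 5) (Fin 5 × Fin 5) ℂ :=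
  Matrix.of fun a b =>
    if a = b ∧ a.1 = a.2 ∧ a.1.val ≤ 1 then (1 / 2 : ℂ) else 0

open scoped MatrixOrder in
lemma Matrix.PosSemidef.eq_sqrt_of_sq_eq {n : Type*} [Fintype n] [DecidableEq n]
    {B : Matrix n n ℂ} (hB : B.PosSemidef) (A : Matrix n n ℂ) (hA : A.PosSemidef)
    (h : B ^ 2 = A) : B = hA.sqrt := by
  have h1 : B = CFC.sqrt A := by
    rw [← h, CFC.sqrt_sq B hB.nonneg]
  rw [h1, CFC.sqrt_eq_cfc, cfc_nnreal_eq_real _ A hA.nonneg, hA.1.cfc_eq]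
  simp [IsHermitian.cfc, Matrix.PosSemidef.sqrt, Function.comp_def, max_eq_left, hA.eigenvalues_nonneg]

def uu : Fin 5 × Fin 5 → ℂ := fun a => if a = (0,0) ∨ a = (1,1) then 1 else 0
def vv : Fin 5 × Fin 5 → ℂ := fun a => if a = (0,0) then 1 else if a = (1,1) then -1 else 0
def ww : Fin 5 × Fin 5 → ℂ := fun a => if a = (2,2) ∨ a = (3,3) ∨ a = (4,4) then 1 else 0

lemma star_uu (a : Fin 5 × Fin 5) : star (uu a) = uu a := by rw [uu]; split <;> simp
lemma star_vv (a : Fin 5 × Fin 5) : star (vv a) = vv a := by rw [vv]; split <;> [simp; split <;> simp]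
lemma star_ww (a : Fin 5 × Fin 5) : star (ww a) = ww a := by rw [ww]; split <;> simp

lemma dot_uu_uu : uu ⬝ᵥ uu = 2 := by
  simp +decide [dotProduct, uu, Fintype.sum_prod_type, Fin.sum_univ_five, Prod.ext_iff]
  norm_num
lemma dot_vv_vv : vv ⬝ᵥ vv = 2 := by
  simp +decide [dotProduct, vv, Fintype.sum_prod_type, Fin.sum_univ_five, Prod.ext_iff]
  norm_num
lemma dot_ww_ww : ww ⬝ᵥ ww = 3 := by
  simp +decide [dotProduct, ww, Fintype.sum_prod_type, Fin.sum_univ_five, Prod.ext_iff]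
  norm_num
lemma dot_uu_vv : uu ⬝ᵥ vv = 0 := by
  simp +decide [dotProduct, uu, vv, Fintype.sum_prod_type, Fin.sum_univ_five, Prod.ext_iff]
lemma dot_vv_uu : vv ⬝ᵥ uu = 0 := by
  simp +decide [dotProduct, uu, vv, Fintype.sum_prod_type, Fin.sum_univ_five, Prod.ext_iff]
lemma dot_uu_ww : uu ⬝ᵥ ww = 0 := by
  simp +decide [dotProduct, uu, ww, Fintype.sum_prod_type, Fin.sum_univ_five, Prod.ext_iff]
lemma dot_ww_uu : ww ⬝ᵥ uu = 0 := by
  simp +decide [dotProduct, uu, ww, Fintype.sum_prod_type, Fin.sum_univ_five, Prod.ext_iff]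
lemma dot_vv_ww : vv ⬝ᵥ ww = 0 := by
  simp +decide [dotProduct, vv, ww, Fintype.sum_prod_type, Fin.sum_univ_five, Prod.ext_iff]
lemma dot_ww_vv : ww ⬝ᵥ vv = 0 := by
  simp +decide [dotProduct, vv, ww, Fintype.sum_prod_type, Fin.sum_univ_five, Prod.ext_iff]

lemma vmv_mul (a b c d : Fin 5 × Fin 5 → ℂ) :
    vecMulVec a b * vecMulVec c d = (b ⬝ᵥ c) • vecMulVec a d := by
  ext i j
  simp only [Matrix.mul_apply, vecMulVec_apply, Matrix.smul_apply, dotProduct, smul_eq_mul,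
    Finset.sum_mul]
  exact Finset.sum_congr rfl fun k _ => by ring

lemma vmv_herm (f : Fin 5 × Fin 5 → ℂ) (hf : ∀ a, star (f a) = f a) :
    (vecMulVec f f)ᴴ = vecMulVec f f := by
  ext i j
  simp [conjTranspose_apply, vecMulVec_apply, hf, mul_comm]

lemma psd_vmv (f : Fin 5 × Fin 5 → ℂ) (hf : ∀ a, star (f a) = f a) :
    (vecMulVec f f).PosSemidef := by
  have h : vecMulVec f f = (Matrix.replicateRow Unit f)ᴴ * Matrix.replicateRow Unit f := by
    ext i j
    simp [Matrix.mul_apply, conjTranspose_apply, vecMulVec_apply, hf]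
  rw [h]
  exact posSemidef_conjTranspose_mul_self _

lemma psd_smul {A : Matrix (Fin 5 × Fin 5) (Fin 5 × Fin 5) ℂ} (hA : A.PosSemidef)
    {c : ℝ} (hc : 0 ≤ c) : (((c : ℂ)) • A).PosSemidef := by
  constructor
  · have : star (c : ℂ) = (c : ℂ) := by simp
    rw [IsHermitian, conjTranspose_smul, this, hA.1]
  · intro x
    exact (hA.smul (by exact_mod_cast hc : (0:ℂ) ≤ c)).2 x

lemma trace_vmv (f : Fin 5 × Fin 5 → ℂ) : (vecMulVec f f).trace = f ⬝ᵥ f := by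
  simp [Matrix.trace, Matrix.diag, vecMulVec_apply, dotProduct]

lemma mul_comb (x y z x' y' z' : ℂ) :
    (x • vecMulVec uu uu + y • vecMulVec vv vv + z • vecMulVec ww ww) *
      (x' • vecMulVec uu uu + y' • vecMulVec vv vv + z' • vecMulVec ww ww) =
    (2*x*x') • vecMulVec uu uu + (2*y*y') • vecMulVec vv vv + (3*z*z') • vecMulVec ww ww := by
  simp only [Matrix.add_mul, Matrix.mul_add, Matrix.smul_mul, Matrix.mul_smul, vmv_mul,
    dot_uu_uu, dot_vv_vv, dot_ww_ww, dot_uu_vv, dot_vv_uu, dot_uu_ww, dot_ww_uu,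
    dot_vv_ww, dot_ww_vv, zero_smul, smul_zero, add_zero, zero_add, smul_smul]
  module


lemma uu_ne (a : Fin 5 × Fin 5) (h : a.1 ≠ a.2) : uu a = 0 := by
  rw [uu, if_neg]; rintro (rfl | rfl) <;> exact h rfl

lemma vv_ne (a : Fin 5 × Fin 5) (h : a.1 ≠ a.2) : vv a = 0 := by
  rw [vv, if_neg, if_neg]
  · rintro rfl; exact h rfl
  · rintro rfl; exact h rfl

lemma ww_ne (a : Fin 5 × Fin 5) (h : a.1 ≠ a.2) : ww a = 0 := by
  rw [ww, if_neg]; rintro (rfl | rfl | rfl) <;> exact h rfl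

lemma Mdecomp (p : ℝ) : ρstate p - δstate =
    (((2*p-1)/4 : ℝ) : ℂ) • vecMulVec uu uu + ((-(1/4) : ℝ) : ℂ) • vecMulVec vv vv
      + (((1-p)/3 : ℝ) : ℂ) • vecMulVec ww ww := by
  ext ⟨a1, a2⟩ ⟨b1, b2⟩
  by_cases ha : a1 = a2
  · by_cases hb : b1 = b2
    · subst ha; subst hb
      fin_cases a1 <;> fin_cases b1 <;>
        (simp +decide [ρstate, δstate, uu, vv, ww, vecMulVec_apply, Prod.ext_iff]; try ring)
    · simp [ρstate, δstate, uu_ne (b1, b2) hb, vv_ne (b1, b2) hb, ww_ne (b1, b2) hb,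
        vecMulVec_apply, hb, Prod.ext_iff]
      rintro rfl rfl
      exact absurd ha (by simpa using hb)
  · simp [ρstate, δstate, uu_ne (a1, a2) ha, vv_ne (a1, a2) ha, ww_ne (a1, a2) ha,
      vecMulVec_apply, ha, Prod.ext_iff]

noncomputable def Smat (p : ℝ) : Matrix (Fin 5 × Fin 5) (Fin 5 × Fin 5) ℂ :=
  ((|2*p-1|/4 : ℝ) : ℂ) • vecMulVec uu uu + ((1/4 : ℝ) : ℂ) • vecMulVec vv vv
    + (((1-p)/3 : ℝ) : ℂ) • vecMulVec ww ww

lemma Smat_psd (p : ℝ) (hp1 : p ≤ 1) : (Smat p).PosSemidef :=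
  ((psd_smul (psd_vmv uu star_uu) (by positivity)).add
    (psd_smul (psd_vmv vv star_vv) (by norm_num))).add
    (psd_smul (psd_vmv ww star_ww) (by linarith))

lemma M_herm (p : ℝ) : (ρstate p - δstate)ᴴ = ρstate p - δstate := by
  rw [Mdecomp]
  simp [conjTranspose_add, conjTranspose_smul, vmv_herm uu star_uu, vmv_herm vv star_vv,
    vmv_herm ww star_ww, Complex.conj_ofReal]

lemma Smat_sq (p : ℝ) : (Smat p) ^ 2 = (ρstate p - δstate)ᴴ * (ρstate p - δstate) := by
  rw [pow_two, M_herm, Mdecomp, Smat, mul_comb, mul_comb]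
  have h1 : (2:ℂ) * ((|2*p-1|/4 : ℝ) : ℂ) * ((|2*p-1|/4 : ℝ) : ℂ)
      = 2 * (((2*p-1)/4 : ℝ) : ℂ) * (((2*p-1)/4 : ℝ) : ℂ) := by
    norm_cast
    ring_nf
    rw [sq_abs]
    ring
  have h2 : (2:ℂ) * ((1/4 : ℝ) : ℂ) * ((1/4 : ℝ) : ℂ)
      = 2 * ((-(1/4) : ℝ) : ℂ) * ((-(1/4) : ℝ) : ℂ) := by push_cast; ring
  rw [h1, h2]

/-- ‖ρ − δ‖₁ equals 2−2p for p < 1/2 and equals 1 for p ≥ 1/2. -/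
theorem stmt_9 (p : ℝ) (hp0 : 0 ≤ p) (hp1 : p ≤ 1) :
    (p < 1 / 2 → traceNorm (ρstate p - δstate) = 2 - 2 * p) ∧
    (1 / 2 ≤ p → traceNorm (ρstate p - δstate) = 1) := by
  have hS : Smat p = (Matrix.posSemidef_conjTranspose_mul_self (ρstate p - δstate)).sqrt :=
    (Smat_psd p hp1).eq_sqrt_of_sq_eq _ _ (Smat_sq p)
  have htrace : traceNorm (ρstate p - δstate) = |2*p-1|/2 + 1/2 + (1-p) := by
    rw [traceNorm, ← hS, Smat]
    simp only [trace_add, trace_smul, trace_vmv, dot_uu_uu, dot_vv_vv, dot_ww_ww,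
      smul_eq_mul]
    push_cast
    simp [Complex.add_re, Complex.mul_re]
    ring
  constructor <;> intro h <;> rw [htrace]
  · rw [abs_of_neg (by linarith)]; ring
  · rw [abs_of_nonneg (by linarith)]; ring
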